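/- For integers r ≥ 1 and L ≥ 2r, the polynomial Q(L,p,r) = Σ_{k=0}^{r} (-1)^k C(r,k) Σ_{j=0}^{k} C(k,j) (L!/(L-j)!) p^j (1-kp)^{L-j} satisfies ∂Q(L,p,r)/∂p = r·L·(L-1)·p·(1-p)^{L-2} · Q(L-2, p/(1-p), r-1), and hence Q(L,·,r) is nonnegative and monotonically increasing on p ∈ [0, 1/r]. -/

import Mathlib

open scoped BigOperators
open Finset

/-- The polynomial
`Q(L,p,r) = ∑_{k=0}^{r} (-1)^k C(r,k) ∑_{j=0}^{k} C(k,j) (L!/(L-j)!) p^j (1-kp)^{L-j}`. -/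
noncomputable def Qpoly (L : ℕ) (p : ℝ) (r : ℕ) : ℝ :=
  ∑ k ∈ Finset.range (r + 1), (-1 : ℝ) ^ k * (r.choose k : ℝ) *
    ∑ j ∈ Finset.range (k + 1), (k.choose j : ℝ) * (L.descFactorial j : ℝ) *
      p ^ j * (1 - (k : ℝ) * p) ^ (L - j)


lemma pascal_sum (m : ℕ) (a : ℕ → ℝ) :
    ∑ j ∈ range (m+2), ((m+1).choose j : ℝ) * a j
      = ∑ j ∈ range (m+1), (m.choose j : ℝ) * a j
        + ∑ i ∈ range (m+1), (m.choose i : ℝ) * a (i+1) := by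
  rw [Finset.sum_range_succ' (fun j => ((m+1).choose j : ℝ) * a j) (m+1)]
  have h1 : ∀ i ∈ range (m+1), ((m+1).choose (i+1) : ℝ) * a (i+1)
      = (m.choose i : ℝ) * a (i+1) + (m.choose (i+1) : ℝ) * a (i+1) := by
    intro i _
    rw [Nat.choose_succ_succ]
    push_cast
    ring
  rw [Finset.sum_congr rfl h1, Finset.sum_add_distrib]
  have h2 : ∑ i ∈ range (m+1), (m.choose (i+1) : ℝ) * a (i+1) + ((m+1).choose 0 : ℝ) * a 0
      = ∑ j ∈ range (m+1), (m.choose j : ℝ) * a j := by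
    have h3 := Finset.sum_range_succ' (fun j => (m.choose j : ℝ) * a j) (m+1)
    rw [Finset.sum_range_succ] at h3
    simp only [Nat.choose_succ_self, Nat.cast_zero, zero_mul, add_zero,
      Nat.choose_zero_right, Nat.cast_one] at h3 ⊢
    linarith
  linarith [h2]


lemma Dk_eq (n m : ℕ) (p s : ℝ) :
    ∑ j ∈ range (m+2), ((m+1).choose j : ℝ) * ((n+2).descFactorial j : ℝ) *
        ((j:ℝ) * p^(j-1) * s^(n+2-j)
          + p^j * (((n+2-j : ℕ):ℝ) * s^(n+2-j-1) * (-(((m:ℝ)+1)))))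
    = -(((m:ℝ)+1) * ((n:ℝ)+2) * ((n:ℝ)+1) * p) *
        ∑ i ∈ range (m+1), (m.choose i : ℝ) * (n.descFactorial i : ℝ) * p^i * s^(n-i) := by
  -- abbreviation
  set a : ℕ → ℝ := fun j => ((n+1).descFactorial j : ℝ) * p^j * s^(n+1-j) with ha
  have key : ∀ j, ((n+2).descFactorial j : ℝ) * ((n+2-j : ℕ):ℝ) = ((n:ℝ)+2) * ((n+1).descFactorial j : ℝ) := by
    intro j
    have h1 : (n+2).descFactorial (j+1) = (n+2-j) * (n+2).descFactorial j := Nat.descFactorial_succ _ _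
    have h2 : (n+2).descFactorial (j+1) = (n+2) * (n+1).descFactorial j := Nat.succ_descFactorial_succ _ _
    have h3 : (n+2-j) * (n+2).descFactorial j = (n+2) * (n+1).descFactorial j := h1 ▸ h2
    calc ((n+2).descFactorial j : ℝ) * ((n+2-j : ℕ):ℝ) = (((n+2-j) * (n+2).descFactorial j : ℕ) : ℝ) := by push_cast; ring
    _ = (((n+2) * (n+1).descFactorial j : ℕ) : ℝ) := by rw [h3]
    _ = ((n:ℝ)+2) * ((n+1).descFactorial j : ℝ) := by push_cast; ring
  simp only [mul_add]
  rw [Finset.sum_add_distrib]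
  -- part A
  have hA : ∑ j ∈ range (m+2), ((m+1).choose j : ℝ) * ((n+2).descFactorial j : ℝ) *
        ((j:ℝ) * p^(j-1) * s^(n+2-j))
      = ((m:ℝ)+1) * ((n:ℝ)+2) * ∑ i ∈ range (m+1), (m.choose i : ℝ) * a i := by
    rw [Finset.sum_range_succ' (fun j => ((m+1).choose j : ℝ) * ((n+2).descFactorial j : ℝ) *
        ((j:ℝ) * p^(j-1) * s^(n+2-j))) (m+1)]
    simp only [Nat.cast_zero, zero_mul, mul_zero, add_zero]
    rw [Finset.mul_sum]
    apply Finset.sum_congr rfl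
    intro i _
    have hc : ((m+1).choose (i+1) : ℝ) * ((i:ℝ)+1) = ((m:ℝ)+1) * (m.choose i : ℝ) := by
      have := Nat.add_one_mul_choose_eq m i
      have : ((m+1) * m.choose i : ℕ) = ((m+1).choose (i+1) * (i+1) : ℕ) := this
      have := congrArg (fun x : ℕ => (x : ℝ)) this
      push_cast at this
      linarith
    have hd : ((n+2).descFactorial (i+1) : ℝ) = ((n:ℝ)+2) * ((n+1).descFactorial i : ℝ) := by
      rw [Nat.succ_descFactorial_succ]; push_cast; ring
    have he : n+2-(i+1) = n+1-i := by omega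
    rw [he, hd]
    simp only [ha]
    push_cast
    linear_combination ((n:ℝ)+2) * (((n+1).descFactorial i : ℝ)) * p^i * s^(n+1-i) * hc
  -- part B
  have hB : ∑ j ∈ range (m+2), ((m+1).choose j : ℝ) * ((n+2).descFactorial j : ℝ) *
        (p^j * (((n+2-j : ℕ):ℝ) * s^(n+2-j-1) * (-(((m:ℝ)+1)))))
      = -(((m:ℝ)+1) * ((n:ℝ)+2)) * ∑ j ∈ range (m+2), ((m+1).choose j : ℝ) * a j := by
    rw [Finset.mul_sum]
    apply Finset.sum_congr rfl
    intro j _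
    have he : n+2-j-1 = n+1-j := by omega
    rw [he]
    simp only [ha]
    linear_combination (-((m:ℝ)+1)) * (((m+1).choose j : ℝ)) * p^j * s^(n+1-j) * (key j)
  have ha1 : ∀ i, a (i+1) = ((n:ℝ)+1) * (n.descFactorial i : ℝ) * p * (p^i * s^(n-i)) := by
    intro i
    simp only [ha]
    have h5 : n+1-(i+1) = n-i := by omega
    rw [h5, Nat.succ_descFactorial_succ]
    push_cast
    ring
  have hS : ∑ i ∈ range (m+1), (m.choose i : ℝ) * a (i+1)
      = (((n:ℝ)+1) * p) * ∑ i ∈ range (m+1), (m.choose i : ℝ) * (n.descFactorial i : ℝ) * p^i * s^(n-i) := by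
    rw [Finset.mul_sum]
    apply Finset.sum_congr rfl
    intro i _
    rw [ha1 i]
    ring
  rw [hA, hB, pascal_sum m a, hS]
  ring

lemma D_eq (n r' : ℕ) (p : ℝ) :
    ∑ k ∈ range (r'+2), (-1:ℝ)^k * ((r'+1).choose k : ℝ) *
        ∑ j ∈ range (k+1), (k.choose j : ℝ) * ((n+2).descFactorial j : ℝ) *
          ((j:ℝ) * p^(j-1) * (1-(k:ℝ)*p)^(n+2-j)
            + p^j * (((n+2-j : ℕ):ℝ) * (1-(k:ℝ)*p)^(n+2-j-1) * (-((k:ℝ)))))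
    = ((r':ℝ)+1) * ((n:ℝ)+2) * ((n:ℝ)+1) * p *
        ∑ m ∈ range (r'+1), (-1:ℝ)^m * (r'.choose m : ℝ) *
          ∑ i ∈ range (m+1), (m.choose i : ℝ) * (n.descFactorial i : ℝ) * p^i * (1-((m:ℝ)+1)*p)^(n-i) := by
  rw [Finset.sum_range_succ' (fun k => (-1:ℝ)^k * ((r'+1).choose k : ℝ) *
        ∑ j ∈ range (k+1), (k.choose j : ℝ) * ((n+2).descFactorial j : ℝ) *
          ((j:ℝ) * p^(j-1) * (1-(k:ℝ)*p)^(n+2-j)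
            + p^j * (((n+2-j : ℕ):ℝ) * (1-(k:ℝ)*p)^(n+2-j-1) * (-((k:ℝ)))))) (r'+1)]
  have h0 : (-1:ℝ)^0 * ((r'+1).choose 0 : ℝ) *
        ∑ j ∈ range (0+1), ((0:ℕ).choose j : ℝ) * ((n+2).descFactorial j : ℝ) *
          ((j:ℝ) * p^(j-1) * (1-((0:ℕ):ℝ)*p)^(n+2-j)
            + p^j * (((n+2-j : ℕ):ℝ) * (1-((0:ℕ):ℝ)*p)^(n+2-j-1) * (-(((0:ℕ):ℝ))))) = 0 := by
    simp
  rw [h0, add_zero, Finset.mul_sum]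
  apply Finset.sum_congr rfl
  intro m hm
  have hcast : ((m+1 : ℕ) : ℝ) = (m:ℝ)+1 := by push_cast; ring
  have hDk := Dk_eq n m p (1-((m:ℝ)+1)*p)
  have hinner : ∑ j ∈ range (m+1+1), ((m+1).choose j : ℝ) * ((n+2).descFactorial j : ℝ) *
          ((j:ℝ) * p^(j-1) * (1-((m+1:ℕ):ℝ)*p)^(n+2-j)
            + p^j * (((n+2-j : ℕ):ℝ) * (1-((m+1:ℕ):ℝ)*p)^(n+2-j-1) * (-(((m+1:ℕ):ℝ)))))
      = -(((m:ℝ)+1) * ((n:ℝ)+2) * ((n:ℝ)+1) * p) *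
        ∑ i ∈ range (m+1), (m.choose i : ℝ) * (n.descFactorial i : ℝ) * p^i * (1-((m:ℝ)+1)*p)^(n-i) := by
    rw [hcast]
    exact hDk
  rw [hinner]
  have hc : ((m:ℝ)+1) * (((r'+1).choose (m+1) : ℕ) : ℝ) = ((r':ℝ)+1) * ((r'.choose m : ℕ) : ℝ) := by
    have h := Nat.add_one_mul_choose_eq r' m
    have h2 := congrArg (fun x : ℕ => (x : ℝ)) h
    push_cast at h2
    linarith
  have hsgn : (-1:ℝ)^(m+1) = -(-1:ℝ)^m := by ring
  rw [hsgn]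
  push_cast
  linear_combination (((-1:ℝ)^m) * ((n:ℝ)+2) * ((n:ℝ)+1) * p *
    ∑ i ∈ range (m+1), (m.choose i : ℝ) * (n.descFactorial i : ℝ) * p^i * (1-((m:ℝ)+1)*p)^(n-i)) * hc

lemma subst_eq (n r' : ℕ) (h : r' ≤ n) (p : ℝ) (hp : p ≠ 1) :
    (1-p)^n * Qpoly n (p/(1-p)) r'
      = ∑ m ∈ range (r'+1), (-1:ℝ)^m * (r'.choose m : ℝ) *
          ∑ i ∈ range (m+1), (m.choose i : ℝ) * (n.descFactorial i : ℝ) * p^i * (1-((m:ℝ)+1)*p)^(n-i) := by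
  have h1p : (1:ℝ) - p ≠ 0 := fun hc => hp (by linarith [sub_eq_zero.mp hc])
  unfold Qpoly
  rw [Finset.mul_sum]
  apply Finset.sum_congr rfl
  intro m hm
  have hm' : m ≤ r' := by simpa [Nat.lt_succ_iff] using hm
  rw [Finset.mul_sum, Finset.mul_sum]
  rw [Finset.mul_sum]
  apply Finset.sum_congr rfl
  intro i hi
  have hin : i ≤ n := by
    have : i ≤ m := by simpa [Nat.lt_succ_iff] using hi
    omega
  have e0 : (1-p)^n = (1-p)^i * (1-p)^(n-i) := by
    rw [← pow_add]
    congr 1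
    omega
  have e1 : (1-p) * (p/(1-p)) = p := by field_simp
  have e2 : (1-p) * (1-(m:ℝ)*(p/(1-p))) = 1-((m:ℝ)+1)*p := by field_simp; ring
  calc (1-p)^n * ((-1:ℝ)^m * (r'.choose m : ℝ) * ((m.choose i : ℝ) * (n.descFactorial i : ℝ) * (p/(1-p))^i * (1-(m:ℝ)*(p/(1-p)))^(n-i)))
      = (-1:ℝ)^m * (r'.choose m : ℝ) * ((m.choose i : ℝ) * (n.descFactorial i : ℝ) * ((1-p)*(p/(1-p)))^i * ((1-p)*(1-(m:ℝ)*(p/(1-p))))^(n-i)) := by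
        rw [e0, mul_pow, mul_pow]; ring
    _ = (-1:ℝ)^m * (r'.choose m : ℝ) * ((m.choose i : ℝ) * (n.descFactorial i : ℝ) * p^i * (1-((m:ℝ)+1)*p)^(n-i)) := by rw [e1, e2]


lemma Qpoly_zero (L : ℕ) (p : ℝ) : Qpoly L p 0 = 1 := by
  simp [Qpoly]

lemma Qpoly_at_zero (L r : ℕ) (hr : 1 ≤ r) : Qpoly L 0 r = 0 := by
  unfold Qpoly
  have hinner : ∀ k : ℕ, ∑ j ∈ range (k+1), (k.choose j : ℝ) * (L.descFactorial j : ℝ) * (0:ℝ)^j * (1-(k:ℝ)*0)^(L-j) = 1 := by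
    intro k
    rw [Finset.sum_eq_single 0]
    · simp
    · intro j _ hj0; simp [zero_pow hj0]
    · intro h; simp at h
  simp only [hinner, mul_one]
  have h1 := Int.alternating_sum_range_choose (n := r)
  have h2 : ((∑ m ∈ range (r+1), (-1:ℤ)^m * (r.choose m) : ℤ) : ℝ)
      = ∑ k ∈ range (r+1), (-1:ℝ)^k * (r.choose k : ℝ) := by push_cast; rfl
  rw [h1] at h2
  rw [← h2, if_neg (show ¬ r = 0 by omega)]
  simp

lemma Qpoly_cont (L r : ℕ) : Continuous fun p : ℝ => Qpoly L p r := by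
  unfold Qpoly
  apply continuous_finset_sum
  intro k _
  apply Continuous.mul continuous_const
  apply continuous_finset_sum
  intro j _
  fun_prop

lemma hasDerivAt_Q (L r : ℕ) (hr : 1 ≤ r) (hL : 2*r ≤ L) (p : ℝ) (hp : p ≠ 1) :
    HasDerivAt (fun q : ℝ => Qpoly L q r)
      ((r : ℝ) * (L : ℝ) * ((L : ℝ) - 1) * p * (1 - p) ^ (L - 2)
        * Qpoly (L - 2) (p / (1 - p)) (r - 1)) p := by
  obtain ⟨n, rfl⟩ : ∃ n, L = n + 2 := ⟨L-2, by omega⟩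
  obtain ⟨r', rfl⟩ : ∃ r', r = r' + 1 := ⟨r-1, by omega⟩
  have hraw : HasDerivAt (fun q : ℝ => Qpoly (n+2) q (r'+1))
      (∑ k ∈ range (r'+2), (-1:ℝ)^k * ((r'+1).choose k : ℝ) *
        ∑ j ∈ range (k+1), (k.choose j : ℝ) * ((n+2).descFactorial j : ℝ) *
          ((j:ℝ) * p^(j-1) * (1-(k:ℝ)*p)^(n+2-j)
            + p^j * (((n+2-j : ℕ):ℝ) * (1-(k:ℝ)*p)^(n+2-j-1) * (-((k:ℝ)))))) p := by
    unfold Qpoly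
    apply HasDerivAt.fun_sum
    intro k _
    apply HasDerivAt.const_mul
    apply HasDerivAt.fun_sum
    intro j _
    have h2 : HasDerivAt (fun q : ℝ => 1 - (k:ℝ)*q) (-(k:ℝ)) p := by
      simpa using ((hasDerivAt_id p).const_mul (k:ℝ)).const_sub 1
    have h5 := ((hasDerivAt_pow j p).mul (h2.pow (n+2-j))).const_mul
      ((k.choose j : ℝ) * ((n+2).descFactorial j : ℝ))
    simp only [mul_assoc] at h5 ⊢
    exact h5
  have hrn : r' ≤ n := by omega
  have hval : ((r'+1 : ℕ) : ℝ) * ((n+2 : ℕ) : ℝ) * (((n+2 : ℕ) : ℝ) - 1) * p * (1 - p) ^ (n+2-2)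
        * Qpoly (n+2-2) (p / (1 - p)) (r'+1-1)
      = ∑ k ∈ range (r'+2), (-1:ℝ)^k * ((r'+1).choose k : ℝ) *
        ∑ j ∈ range (k+1), (k.choose j : ℝ) * ((n+2).descFactorial j : ℝ) *
          ((j:ℝ) * p^(j-1) * (1-(k:ℝ)*p)^(n+2-j)
            + p^j * (((n+2-j : ℕ):ℝ) * (1-(k:ℝ)*p)^(n+2-j-1) * (-((k:ℝ))))) := by
    rw [D_eq n r' p, ← subst_eq n r' hrn p hp]
    have e1 : n+2-2 = n := rfl
    have e2 : r'+1-1 = r' := rfl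
    rw [e1, e2]
    push_cast
    ring
  exact hval ▸ hraw

lemma Q_nonneg_mono : ∀ r L : ℕ, 2*r ≤ L →
    (∀ p ∈ Set.Icc (0:ℝ) (1/(r:ℝ)), 0 ≤ Qpoly L p r)
    ∧ MonotoneOn (fun p : ℝ => Qpoly L p r) (Set.Icc (0:ℝ) (1/(r:ℝ))) := by
  intro r
  induction r with
  | zero =>
    intro L _
    constructor
    · intro p _; rw [Qpoly_zero]; exact zero_le_one
    · simp only [Qpoly_zero]; exact monotoneOn_const
  | succ r IH =>
    intro L hL
    have hL2 : 2 ≤ L := by omega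
    have hrp : (0:ℝ) < (r:ℝ) + 1 := by positivity
    have hub : (1:ℝ)/((r:ℝ)+1) ≤ 1 := by
      rw [div_le_one hrp]; linarith
    have hderiv_nonneg : ∀ x ∈ Set.Ioo (0:ℝ) (1/((r:ℝ)+1)), 0 ≤
        ((r+1 : ℕ) : ℝ) * (L : ℝ) * ((L : ℝ) - 1) * x * (1 - x) ^ (L - 2)
          * Qpoly (L - 2) (x / (1 - x)) (r+1-1) := by
      intro x hx
      obtain ⟨hx0, hx1⟩ := hx
      have hxlt1 : x < 1 := lt_of_lt_of_le hx1 hub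
      have h1x : (0:ℝ) < 1 - x := by linarith
      have hq0 : 0 ≤ x / (1-x) := div_nonneg hx0.le h1x.le
      have hQ : 0 ≤ Qpoly (L-2) (x/(1-x)) r := by
        rcases Nat.eq_zero_or_pos r with hr0 | hr1
        · subst hr0; rw [Qpoly_zero]; exact zero_le_one
        · apply (IH (L-2) (by omega)).1
          refine ⟨hq0, ?_⟩
          have hrpos : (0:ℝ) < (r:ℝ) := by exact_mod_cast hr1
          rw [div_le_div_iff₀ h1x hrpos]
          have : x * ((r:ℝ)+1) < 1 := by
            have := (lt_div_iff₀ hrp).mp hx1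
            linarith
          nlinarith
      have : r+1-1 = r := rfl
      rw [this]
      have hL1 : (2:ℝ) ≤ (L:ℝ) := by exact_mod_cast hL2
      have hpw : (0:ℝ) ≤ (1-x)^(L-2) := by positivity
      have hfac : (0:ℝ) ≤ ((r+1 : ℕ) : ℝ) * (L : ℝ) * ((L : ℝ) - 1) * x * (1 - x) ^ (L - 2) := by
        apply mul_nonneg
        apply mul_nonneg
        apply mul_nonneg
        apply mul_nonneg
        · positivity
        · positivity
        · linarith
        · exact hx0.le
        · exact hpw
      exact mul_nonneg hfac hQ
    have hmono : MonotoneOn (fun p : ℝ => Qpoly L p (r+1)) (Set.Icc (0:ℝ) (1/((r+1:ℕ):ℝ))) := by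
      apply monotoneOn_of_deriv_nonneg (convex_Icc _ _) (Qpoly_cont L (r+1)).continuousOn
      · rw [interior_Icc]
        intro x hx
        have hxlt1 : x < 1 := by
          have : ((r+1:ℕ):ℝ) = (r:ℝ)+1 := by push_cast; ring
          rw [this] at hx
          exact lt_of_lt_of_le hx.2 hub
        exact (hasDerivAt_Q L (r+1) (by omega) hL x (ne_of_lt hxlt1)).differentiableAt.differentiableWithinAt
      · rw [interior_Icc]
        intro x hx
        have hc : ((r+1:ℕ):ℝ) = (r:ℝ)+1 := by push_cast; ring
        rw [hc] at hx
        have hxlt1 : x < 1 := lt_of_lt_of_le hx.2 hub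
        rw [(hasDerivAt_Q L (r+1) (by omega) hL x (ne_of_lt hxlt1)).deriv]
        exact hderiv_nonneg x hx
    constructor
    · intro p hp
      have h0 : (0:ℝ) ∈ Set.Icc (0:ℝ) (1/((r+1:ℕ):ℝ)) := ⟨le_refl 0, by positivity⟩
      calc (0:ℝ) = Qpoly L 0 (r+1) := (Qpoly_at_zero L (r+1) (by omega)).symm
        _ ≤ Qpoly L p (r+1) := hmono h0 hp hp.1
    · exact hmono


theorem stmt12 (L r : ℕ) (hr : 1 ≤ r) (hL : 2 * r ≤ L) :
    (∀ p : ℝ, p ≠ 1 →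
        HasDerivAt (fun q : ℝ => Qpoly L q r)
          ((r : ℝ) * (L : ℝ) * ((L : ℝ) - 1) * p * (1 - p) ^ (L - 2)
            * Qpoly (L - 2) (p / (1 - p)) (r - 1)) p)
      ∧ (∀ p ∈ Set.Icc (0 : ℝ) (1 / (r : ℝ)), 0 ≤ Qpoly L p r)
      ∧ MonotoneOn (fun p : ℝ => Qpoly L p r) (Set.Icc (0 : ℝ) (1 / (r : ℝ))) := by
  exact ⟨fun p hp => hasDerivAt_Q L r hr hL p hp, (Q_nonneg_mono r L hL).1, (Q_nonneg_mono r L hL).2⟩
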